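/- Let a ≥ 2 and let l = a*x + y be an element of ⟨a, a+1⟩ with quotient x and remainder y from Euclidean division by a, satisfying x - a ≤ y ≤ a - 1. Then the number of elements m of ⟨a, a+1⟩ such that l - m also lies in ⟨a, a+1⟩ equals (x - y + 1)(y + 1). -/
import Mathlib


def Lam (a : ℕ) : Set ℕ := {n | ∃ i j : ℕ, n = i * a + j * (a + 1)}

/-- `ν(l)`: the number of `m ∈ Λ` such that `l - m ∈ Λ`. -/
noncomputable def nu (a l : ℕ) : ℕ := {m | m ∈ Lam a ∧ ∃ k ∈ Lam a, m + k = l}.ncard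

lemma lam_mem (a t r : ℕ) : t * a + r * (a + 1) ∈ Lam a := ⟨t, r, rfl⟩

lemma lam_norm {a n : ℕ} (ha : 0 < a) (h : n ∈ Lam a) :
    ∃ t r : ℕ, r < a ∧ n = t * a + r * (a + 1) := by
  obtain ⟨i, j, hn⟩ := h
  refine ⟨i + (a + 1) * (j / a), j % a, Nat.mod_lt _ ha, ?_⟩
  have hj : a * (j / a) + j % a = j := Nat.div_add_mod j a
  set q := j / a
  set r := j % a
  rw [hn, ← hj]; ring

lemma mod_helper (a k r : ℕ) (hr : r < a) : (k * a + r) % a = r := by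
  rw [add_comm, Nat.add_mul_mod_self_right, Nat.mod_eq_of_lt hr]

lemma rep_uniq {a t r t' r' : ℕ} (ha : 0 < a) (hr : r < a) (hr' : r' < a)
    (h : t * a + r = t' * a + r') : t = t' ∧ r = r' := by
  have hrr : r = r' := by
    have h1 := mod_helper a t r hr
    have h2 := mod_helper a t' r' hr'
    rw [h, h2] at h1; exact h1.symm
  subst hrr
  have ht : t * a = t' * a := by omega
  exact ⟨Nat.eq_of_mul_eq_mul_right ha ht, rfl⟩

lemma rep_uniq' {a t r t' r' : ℕ} (ha : 0 < a) (hr : r < a) (hr' : r' < a)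
    (h : t * a + r * (a + 1) = t' * a + r' * (a + 1)) : t = t' ∧ r = r' := by
  have h1 : (t + r) * a + r = (t' + r') * a + r' := by
    have e : ∀ u v : ℕ, u * a + v * (a + 1) = (u + v) * a + v := by intro u v; ring
    rw [e, e] at h; exact h
  obtain ⟨h2, h3⟩ := rep_uniq ha hr hr' h1
  exact ⟨by omega, h3⟩

theorem stmt9 (a l : ℕ) (ha : 2 ≤ a) (hl : l ∈ Lam a)
    (h1 : (l / a : ℤ) - a ≤ l % a) (h2 : (l % a : ℤ) ≤ a - 1) :
    nu a l = (l / a - l % a + 1) * (l % a + 1) := by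
  have ha0 : 0 < a := by omega
  set x := l / a with hx
  set y := l % a with hy
  have hya : y < a := Nat.mod_lt _ ha0
  have hlxy : a * x + y = l := Nat.div_add_mod l a
  -- y ≤ x from l ∈ Λ
  have hxy : y ≤ x := by
    obtain ⟨t, r, hr, hn⟩ := lam_norm ha0 hl
    have h1 : (t + r) * a + r = x * a + y := by
      rw [← hlxy] at hn
      have : t * a + r * (a + 1) = (t + r) * a + r := by ring
      rw [this] at hn
      rw [← hn]; ring
    obtain ⟨h2, h3⟩ := rep_uniq ha0 hr hya h1
    omega
  have hxa : x ≤ y + a := by omega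
  -- the finset of divisors
  set F : Finset ℕ :=
    (Finset.range (x - y + 1) ×ˢ Finset.range (y + 1)).image
      (fun p => p.1 * a + p.2 * (a + 1)) with hF
  have hset : {m | m ∈ Lam a ∧ ∃ k ∈ Lam a, m + k = l} = ↑F := by
    ext m
    simp only [Set.mem_setOf_eq, hF, Finset.coe_image, Set.mem_image,
      Finset.mem_coe, Finset.mem_product, Finset.mem_range]
    constructor
    · rintro ⟨hm, k, hk, hmk⟩
      obtain ⟨t, r, hr, hmr⟩ := lam_norm ha0 hm
      obtain ⟨t', r', hr', hkr⟩ := lam_norm ha0 hk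
      have hsum : (t + t' + r + r') * a + (r + r') = x * a + y := by
        rw [hmr, hkr, ← hlxy] at hmk
        have e : t * a + r * (a + 1) + (t' * a + r' * (a + 1))
            = (t + t' + r + r') * a + (r + r') := by ring
        rw [e] at hmk
        rw [hmk]; ring
      -- either r + r' = y (good) or r + r' = y + a (contradiction)
      by_cases hRa : r + r' < a
      · obtain ⟨hS, hR⟩ := rep_uniq ha0 hRa hya hsum
        exact ⟨⟨t, r⟩, ⟨by omega, by omega⟩, hmr.symm⟩
      · exfalso
        have hR' : r + r' - a < a := by omega
        have hsum2 : (t + t' + r + r' + 1) * a + (r + r' - a) = x * a + y := by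
          have e1 : (t + t' + r + r' + 1) * a = (t + t' + r + r') * a + a := by ring
          omega
        obtain ⟨hS, hR⟩ := rep_uniq ha0 hR' hya hsum2
        omega
    · rintro ⟨⟨t, r⟩, ⟨ht, hr⟩, hm⟩
      refine ⟨hm ▸ lam_mem a t r, (x - y - t) * a + (y - r) * (a + 1),
        lam_mem a _ _, ?_⟩
      have e1 : t + (x - y - t) = x - y := by omega
      have e2 : r + (y - r) = y := by omega
      have : m + ((x - y - t) * a + (y - r) * (a + 1))
          = (t + (x - y - t)) * a + (r + (y - r)) * (a + 1) := by
        rw [← hm]; ring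
      rw [this, e1, e2, ← hlxy]
      have e3 : x - y + y = x := by omega
      have : (x - y) * a + y * (a + 1) = (x - y + y) * a + y := by ring
      rw [this, e3]; ring
  have hinj : Set.InjOn (fun p : ℕ × ℕ => p.1 * a + p.2 * (a + 1))
      ↑(Finset.range (x - y + 1) ×ˢ Finset.range (y + 1)) := by
    rintro ⟨t, r⟩ hp ⟨t', r'⟩ hq h
    simp only [Finset.coe_product, Finset.coe_range, Set.mem_prod, Set.mem_Iio] at hp hq
    obtain ⟨h1, h2⟩ := rep_uniq' ha0 (by omega : r < a) (by omega : r' < a) h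
    exact Prod.ext h1 h2
  unfold nu
  rw [hset, Set.ncard_coe_finset, hF, Finset.card_image_of_injOn hinj,
    Finset.card_product, Finset.card_range, Finset.card_range]
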